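/- Conversely, if linear maps f_n satisfy f_0 = I and the recursion (n+1) f_{n+1} = \sum_{k=0}^{n} F_{k+1} \circ f_{n-k} for a sequence of linear maps {F_m}_{m \geq 1} on a vector space over a field of characteristic zero, then f_n equals the explicit formula f_n = \sum_{i=1}^{n} \sum_{r_1 + \cdots + r_i = n, r_j \geq 1} \left( \prod_{j=1}^{i} \frac{1}{r_j + \cdots + r_i} \right) F_{r_1} \circ \cdots \circ F_{r_i} for all n \geq 1. -/

import Mathlib

open Finset in
/-- The map `∑_{i=1}^{n} ∑_{r₁+⋯+rᵢ=n, rⱼ≥1} (∏ⱼ 1/(rⱼ+⋯+rᵢ)) F_{r₁} ∘ ⋯ ∘ F_{rᵢ}`. -/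
noncomputable def explicitHigherTerm {K V : Type*} [Field K] [AddCommGroup V] [Module K V]
    (F : ℕ → Module.End K V) (n : ℕ) : Module.End K V :=
  ∑ i ∈ Finset.Icc 1 n,
    ∑ r ∈ (Finset.Nat.antidiagonalTuple i n).filter (fun r => ∀ j, 0 < r j),
      (∏ j, (((∑ j' ∈ Finset.Ici j, r j') : ℕ) : K)⁻¹) •
        (List.ofFn (fun j => F (r j))).prod

open Finset in
private lemma fin_sum_Ici_succ {m : ℕ} (j : Fin m) (v : Fin (m + 1) → ℕ) :
    ∑ j' ∈ Ici j.succ, v j' = ∑ j' ∈ Ici j, v j'.succ := by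
  rw [Ici_eq_cons_Ioi, Ici_eq_cons_Ioi, Finset.sum_cons, Finset.sum_cons, Fin.sum_Ioi_succ]

open Finset in
private lemma fin_Ici_zero (m : ℕ) : Ici (0 : Fin (m + 1)) = Finset.univ := by
  ext x; simp [Fin.zero_le]

/-- Auxiliary version of `explicitHigherTerm` including the `i = 0` term, so that it
equals `1` at `n = 0`. -/
noncomputable def gAux {K V : Type*} [Field K] [AddCommGroup V] [Module K V]
    (F : ℕ → Module.End K V) (n : ℕ) : Module.End K V :=
  ∑ i ∈ Finset.range (n + 1),
    ∑ r ∈ (Finset.Nat.antidiagonalTuple i n).filter (fun r => ∀ j, 0 < r j),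
      (∏ j, (((∑ j' ∈ Finset.Ici j, r j') : ℕ) : K)⁻¹) •
        (List.ofFn (fun j => F (r j))).prod

private lemma gAux_zero {K V : Type*} [Field K] [AddCommGroup V] [Module K V]
    (F : ℕ → Module.End K V) : gAux F 0 = 1 := by
  simp [gAux, Finset.Nat.antidiagonalTuple_zero_zero, Finset.filter_singleton]

private lemma gAux_eq {K V : Type*} [Field K] [AddCommGroup V] [Module K V]
    (F : ℕ → Module.End K V) {n : ℕ} (hn : 1 ≤ n) : gAux F n = explicitHigherTerm F n := by
  obtain ⟨m, rfl⟩ : ∃ m, n = m + 1 := ⟨n - 1, by omega⟩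
  have hins : Finset.range (m + 1 + 1) = insert 0 (Finset.Icc 1 (m + 1)) := by
    ext x; simp [Finset.mem_range, Finset.mem_Icc]; omega
  rw [gAux, explicitHigherTerm, hins, Finset.sum_insert (by simp)]
  simp [Finset.Nat.antidiagonalTuple_zero_succ]

open Finset Finset.Nat in
private lemma gAux_rec {K V : Type*} [Field K] [CharZero K] [AddCommGroup V] [Module K V]
    (F : ℕ → Module.End K V) (n : ℕ) :
    ((n : K) + 1) • gAux F (n + 1) =
      ∑ k ∈ Finset.range (n + 1), F (k + 1) * gAux F (n - k) := by
  have hne : ((n : K) + 1) ≠ 0 := Nat.cast_add_one_ne_zero n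
  -- expand both sides
  simp only [gAux, Finset.mul_sum, Finset.smul_sum, mul_smul_comm]
  rw [Finset.sum_range_succ']
  simp only [Finset.Nat.antidiagonalTuple_zero_succ, Finset.filter_empty, Finset.sum_empty,
    smul_zero, add_zero]
  rw [Finset.sum_sigma']
  conv_rhs => enter [2]; ext k; rw [Finset.sum_sigma']
  conv_rhs => rw [Finset.sum_sigma']
  refine Finset.sum_nbij' (fun p => ⟨p.2 0 - 1, p.1, Fin.tail p.2⟩)
    (fun q => ⟨q.2.1, Fin.cons (q.1 + 1) q.2.2⟩) ?_ ?_ ?_ ?_ ?_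
  · rintro ⟨i, r⟩ hp
    simp only [Finset.mem_sigma, Finset.mem_range, Finset.mem_filter,
      Finset.Nat.mem_antidiagonalTuple] at hp ⊢
    obtain ⟨hi, hsum, hpos⟩ := hp
    rw [Fin.sum_univ_succ] at hsum
    have h0 : 1 ≤ r 0 := hpos 0
    have htail : ∀ j : Fin i, 1 ≤ r j.succ := fun j => hpos j.succ
    have hi' : i ≤ ∑ j : Fin i, r j.succ := by
      calc i = ∑ _j : Fin i, 1 := by simp
        _ ≤ ∑ j : Fin i, r j.succ := Finset.sum_le_sum fun j _ => htail j
    refine ⟨by omega, by omega, ?_, fun j => hpos j.succ⟩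
    show ∑ j : Fin i, r j.succ = n - (r 0 - 1)
    omega
  · rintro ⟨k, i, t⟩ hq
    simp only [Finset.mem_sigma, Finset.mem_range, Finset.mem_filter,
      Finset.Nat.mem_antidiagonalTuple] at hq ⊢
    obtain ⟨hk, hi, hsum, hpos⟩ := hq
    refine ⟨by omega, ?_, ?_⟩
    · rw [Fin.sum_univ_succ, Fin.cons_zero]
      simp only [Fin.cons_succ]
      omega
    · intro j
      refine Fin.cases ?_ ?_ j
      · simp
      · intro j'; simpa using hpos j'
  · rintro ⟨i, r⟩ hp
    simp only [Finset.mem_sigma, Finset.mem_range, Finset.mem_filter,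
      Finset.Nat.mem_antidiagonalTuple] at hp
    have h0 : 1 ≤ r 0 := hp.2.2 0
    have : r 0 - 1 + 1 = r 0 := by omega
    simp [this, Fin.cons_self_tail]
  · rintro ⟨k, i, t⟩ hq
    simp [Fin.tail_cons]
  · rintro ⟨i, r⟩ hp
    simp only [Finset.mem_sigma, Finset.mem_range, Finset.mem_filter,
      Finset.Nat.mem_antidiagonalTuple] at hp
    obtain ⟨hi, hsum, hpos⟩ := hp
    have h0 : r 0 - 1 + 1 = r 0 := Nat.succ_pred_eq_of_pos (hpos 0)
    show ((n : K) + 1) • ((∏ j, (((∑ j' ∈ Finset.Ici j, r j') : ℕ) : K)⁻¹) •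
        (List.ofFn (fun j => F (r j))).prod) = _
    rw [Fin.prod_univ_succ]
    have hIci0 : ∑ j' ∈ Finset.Ici (0 : Fin (i + 1)), r j' = n + 1 := by
      rw [fin_Ici_zero]; exact hsum
    have hIciS : ∀ j : Fin i, ∑ j' ∈ Finset.Ici j.succ, r j' =
        ∑ j' ∈ Finset.Ici j, Fin.tail r j' := fun j => fin_sum_Ici_succ j r
    rw [hIci0]
    simp only [hIciS]
    rw [List.ofFn_succ, List.prod_cons]
    show ((n : K) + 1) • ((((n + 1 : ℕ) : K)⁻¹ *
        ∏ j : Fin i, (((∑ j' ∈ Finset.Ici j, Fin.tail r j') : ℕ) : K)⁻¹) •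
        (F (r 0) * (List.ofFn (fun j => F (r (Fin.succ j)))).prod)) = _
    rw [smul_smul]
    push_cast
    rw [← mul_assoc, mul_inv_cancel₀ hne, one_mul, h0]
    rfl

theorem recursion_gives_explicit_formula
    {K V : Type*} [Field K] [CharZero K] [AddCommGroup V] [Module K V]
    (F : ℕ → Module.End K V) (f : ℕ → Module.End K V)
    (hf0 : f 0 = 1)
    (hrec : ∀ n : ℕ, ((n : K) + 1) • f (n + 1) = ∑ k ∈ Finset.range (n + 1), F (k + 1) * f (n - k)) :
    ∀ n, 1 ≤ n → f n = explicitHigherTerm F n := by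
  have hg : ∀ n, f n = gAux F n := by
    intro n
    induction n using Nat.strong_induction_on with
    | _ n ih =>
      match n with
      | 0 => rw [hf0, gAux_zero]
      | (m + 1) =>
        have h1 := hrec m
        have h2 := gAux_rec F m
        have key : ((m : K) + 1) • f (m + 1) = ((m : K) + 1) • gAux F (m + 1) := by
          rw [h1, h2]
          exact Finset.sum_congr rfl fun k _ => by rw [ih (m - k) (by omega)]
        exact smul_right_injective _ (Nat.cast_add_one_ne_zero m) key
  intro n hn
  rw [hg n, gAux_eq F hn]
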